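/- Every graph admits a polyline RAC drawing with at most three bends per edge. -/

import Mathlib

open Bornology

noncomputable section

/-- The Euclidean plane. -/
abbrev Pt : Type := EuclideanSpace ℝ (Fin 2)

/-- The consecutive pairs of points of a polyline. -/
def polySegs (l : List Pt) : List (Pt × Pt) := l.zip l.tail

/-- The point set of a polyline. -/
def polyImage (l : List Pt) : Set Pt := ⋃ s ∈ polySegs l, segment ℝ s.1 s.2

/-- A drawing of a multigraph with edge set `E`, endpoint map `ends` and vertex set `V`,
where each edge is drawn as a polyline joining the positions of its endpoints, and
no edge passes through the position of a vertex other than its endpoints. -/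
structure MultiDrawing {V E : Type*} (ends : E → Sym2 V) where
  pos : V → Pt
  inj : Function.Injective pos
  pts : E → List Pt
  ends_ok : ∀ e u v, ends e = s(u, v) →
    ((pts e).head? = some (pos u) ∧ (pts e).getLast? = some (pos v)) ∨
    ((pts e).head? = some (pos v) ∧ (pts e).getLast? = some (pos u))
  through : ∀ e u v, ends e = s(u, v) →
    polyImage (pts e) ∩ Set.range pos = {pos u, pos v}

variable {V E : Type*}

/-- The points of the plane occupied by vertices. -/
def vertexPts {ends : E → Sym2 V} (D : MultiDrawing ends) : Set Pt := Set.range D.pos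

/-- The points where the edge `e` is crossed by some other edge. -/
def crossOn {ends : E → Sym2 V} (D : MultiDrawing ends) (e : E) : Set Pt :=
  { x | ∃ e', e' ≠ e ∧ x ∈ polyImage (D.pts e) ∧ x ∈ polyImage (D.pts e') ∧ x ∉ vertexPts D }

/-- All crossing points of the drawing. -/
def crossingPts {ends : E → Sym2 V} (D : MultiDrawing ends) : Set Pt := ⋃ e, crossOn D e

/-- The vertex points together with the crossing points. -/
def featurePts {ends : E → Sym2 V} (D : MultiDrawing ends) : Set Pt :=
  vertexPts D ∪ crossingPts D

/-- A drawing is 1-plane if every edge is crossed at most once. -/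
def OnePlane {ends : E → Sym2 V} (D : MultiDrawing ends) : Prop :=
  ∀ e, (crossOn D e).Subsingleton

/-- A drawing is plane if it has no crossings at all. -/
def PlaneDrawing {ends : E → Sym2 V} (D : MultiDrawing ends) : Prop := crossingPts D = ∅

/-- The set of points covered by the drawing. -/
def drawImage {ends : E → Sym2 V} (D : MultiDrawing ends) : Set Pt :=
  vertexPts D ∪ ⋃ e, polyImage (D.pts e)

/-- A face of the drawing: a connected component of the complement of the drawing. -/
def IsFace {ends : E → Sym2 V} (D : MultiDrawing ends) (F : Set Pt) : Prop :=
  ∃ x, x ∉ drawImage D ∧ F = connectedComponentIn (drawImage D)ᶜ x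

/-- The degree of a face: the number of vertices and crossings on its boundary. -/
def faceDeg {ends : E → Sym2 V} (D : MultiDrawing ends) (F : Set Pt) : ℕ :=
  (closure F ∩ featurePts D).ncard

/-- A 1-plane drawing is triangulated if every face has degree three. -/
def Triangulated {ends : E → Sym2 V} (D : MultiDrawing ends) : Prop :=
  ∀ F, IsFace D F → faceDeg D F = 3

/-- The edges `e₁` and `e₂` cross each other. -/
def Cross {ends : E → Sym2 V} (D : MultiDrawing ends) (e₁ e₂ : E) : Prop :=
  e₁ ≠ e₂ ∧ ∃ x, x ∈ polyImage (D.pts e₁) ∧ x ∈ polyImage (D.pts e₂) ∧ x ∉ vertexPts D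

/-- `x` lies strictly inside the bounded region enclosed by the closed curve `C`. -/
def InsideRegion (C : Set Pt) (x : Pt) : Prop :=
  x ∉ C ∧ IsBounded (connectedComponentIn Cᶜ x)

/-- The edge `e` is free of crossings. -/
def CrossFree {ends : E → Sym2 V} (D : MultiDrawing ends) (e : E) : Prop := crossOn D e = ∅

/-- The crossing pair of edges `e₁, e₂` forms an empty kite: their four endpoints induce a
`K₄` whose four boundary edges are crossing-free and bound a region containing no vertex. -/
def FormsEmptyKite {ends : E → Sym2 V} (D : MultiDrawing ends) (e₁ e₂ : E) : Prop :=
  Cross D e₁ e₂ ∧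
  ∃ (a b c d : V) (eab ebc ecd eda : E),
    [a, b, c, d].Pairwise (· ≠ ·) ∧
    ends e₁ = s(a, c) ∧ ends e₂ = s(b, d) ∧
    ends eab = s(a, b) ∧ ends ebc = s(b, c) ∧ ends ecd = s(c, d) ∧ ends eda = s(d, a) ∧
    CrossFree D eab ∧ CrossFree D ebc ∧ CrossFree D ecd ∧ CrossFree D eda ∧
    ∀ w : V, ¬ InsideRegion
      (polyImage (D.pts eab) ∪ polyImage (D.pts ebc) ∪
        polyImage (D.pts ecd) ∪ polyImage (D.pts eda)) (D.pos w)

/-- The simple graph underlying a multigraph. -/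
def mGraph (ends : E → Sym2 V) : SimpleGraph V where
  Adj u v := u ≠ v ∧ ∃ e, ends e = s(u, v)
  symm := by
    refine ⟨?_⟩
    rintro u v ⟨h, e, he⟩
    exact ⟨Ne.symm h, e, by rwa [Sym2.eq_swap]⟩
  loopless := by refine ⟨?_⟩; rintro u ⟨h, -⟩; exact h rfl

/-- `{u, v}` is a separation pair of the graph `G` restricted to the vertex set `S`. -/
def SepPairOn (G : SimpleGraph V) (S : Set V) (u v : V) : Prop :=
  u ≠ v ∧ ¬ (G.induce (S \ {u, v})).Connected

/-- A graph is 2-connected: at least 3 vertices and removing any single vertex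
leaves it connected. -/
def TwoConn (G : SimpleGraph V) : Prop :=
  3 ≤ Nat.card V ∧ ∀ S : Set V, S.ncard ≤ 1 → (G.induce Sᶜ).Connected

/-- A graph is 3-connected: at least 4 vertices and removing any two vertices
leaves it connected. -/
def ThreeConn (G : SimpleGraph V) : Prop :=
  4 ≤ Nat.card V ∧ ∀ S : Set V, S.ncard ≤ 2 → (G.induce Sᶜ).Connected

/-- The multigraph is simple: no loops and no parallel edges. -/
def SimpleM (ends : E → Sym2 V) : Prop :=
  (∀ e, ¬ (ends e).IsDiag) ∧ ∀ e e', ends e = ends e' → e = e'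

/-- Every edge is drawn as a straight-line segment (no bends). -/
def StraightLine {ends : E → Sym2 V} (D : MultiDrawing ends) : Prop :=
  ∀ e, (D.pts e).length ≤ 2

/-- Every edge is drawn as a polyline with at most `k` bends. -/
def AtMostBends {ends : E → Sym2 V} (D : MultiDrawing ends) (k : ℕ) : Prop :=
  ∀ e, (D.pts e).length ≤ k + 2

/-- A RAC drawing: any two edges that cross do so at a right angle. -/
def RACDrawing {ends : E → Sym2 V} (D : MultiDrawing ends) : Prop :=
  ∀ e₁ e₂, e₁ ≠ e₂ → ∀ x, x ∈ polyImage (D.pts e₁) → x ∈ polyImage (D.pts e₂) →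
    x ∉ vertexPts D →
    ∃ s ∈ polySegs (D.pts e₁), ∃ t ∈ polySegs (D.pts e₂),
      x ∈ segment ℝ s.1 s.2 ∧ x ∈ segment ℝ t.1 t.2 ∧
      @inner ℝ Pt _ (s.2 - s.1) (t.2 - t.1) = 0

/-- A drawing of a simple graph `G`. -/
abbrev GDrawing {V : Type*} (G : SimpleGraph V) : Type _ :=
  MultiDrawing (fun e : G.edgeSet => (e : Sym2 V))

namespace TBR
variable {W : Type*} [Fintype W] (G : SimpleGraph W)

def rk (v : W) : ℕ := (Fintype.equivFin W v : ℕ)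

lemma rk_inj : Function.Injective (rk (W := W)) := fun u v h =>
  (Fintype.equivFin W).injective (Fin.val_injective h)

lemma exists_ends (e : G.edgeSet) :
    ∃ p : W × W, (e : Sym2 W) = s(p.1, p.2) ∧ rk p.1 < rk p.2 := by
  obtain ⟨u, v, h⟩ : ∃ u v, (e : Sym2 W) = s(u, v) :=
    Sym2.ind (f := fun z => ∃ u v, z = s(u, v)) (fun u v => ⟨u, v, rfl⟩) (e : Sym2 W)
  have hadj : G.Adj u v := by
    have h2 := e.2
    rw [h] at h2
    exact h2
  have hne : rk u ≠ rk v := fun hh => hadj.ne (rk_inj hh)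
  rcases hne.lt_or_gt with hlt | hlt
  · exact ⟨(u, v), h, hlt⟩
  · exact ⟨(v, u), h.trans (Sym2.eq_swap), hlt⟩

def ea (e : G.edgeSet) : W := (Classical.choose (exists_ends G e)).1
def eb (e : G.edgeSet) : W := (Classical.choose (exists_ends G e)).2

lemma ends_eq (e : G.edgeSet) : (e : Sym2 W) = s(ea G e, eb G e) :=
  (Classical.choose_spec (exists_ends G e)).1

lemma rk_lt (e : G.edgeSet) : rk (ea G e) < rk (eb G e) :=
  (Classical.choose_spec (exists_ends G e)).2

def idx (e : G.edgeSet) : ℕ := Nat.pair (rk (ea G e)) (rk (eb G e))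

lemma idx_inj {e e' : G.edgeSet} (h : idx G e = idx G e') : e = e' := by
  rw [idx, idx, Nat.pair_eq_pair] at h
  have h1 : ea G e = ea G e' := rk_inj h.1
  have h2 : eb G e = eb G e' := rk_inj h.2
  exact Subtype.ext (by rw [ends_eq G e, ends_eq G e', h1, h2])

def dl (e : G.edgeSet) : ℝ := 1/2 - 1/(idx G e + 2)

lemma dl_nonneg (e : G.edgeSet) : 0 ≤ dl G e := by
  have h2 : (2:ℝ) ≤ (idx G e : ℝ) + 2 := by linarith [Nat.cast_nonneg (α := ℝ) (idx G e)]
  have := one_div_le_one_div_of_le (by norm_num) h2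
  simp only [dl]
  linarith

lemma dl_lt (e : G.edgeSet) : dl G e < 1/2 := by
  have : (0:ℝ) < 1/((idx G e : ℝ) + 2) := by positivity
  simp only [dl]; linarith

lemma dl_inj {e e' : G.edgeSet} (h : dl G e = dl G e') : e = e' := by
  apply idx_inj G
  have h1 : (1:ℝ)/(idx G e + 2) = 1/(idx G e' + 2) := by
    simp only [dl] at h; linarith
  have hne : ((idx G e : ℝ) + 2) ≠ 0 := by positivity
  have hne' : ((idx G e' : ℝ) + 2) ≠ 0 := by positivity
  field_simp at h1
  have h3 : (idx G e : ℝ) = idx G e' := by linarith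
  exact_mod_cast h3

def xc (v : W) : ℝ := 5 * rk v

lemma xc_eq_of_close {v w : W} (h : |xc v - xc w| < 5) : v = w := by
  by_contra hne
  have hr : rk v ≠ rk w := fun hh => hne (rk_inj hh)
  rcases hr.lt_or_gt with hlt | hlt
  · have : (rk v : ℝ) + 1 ≤ rk w := by exact_mod_cast hlt
    have h5 : xc w - xc v ≥ 5 := by simp only [xc]; linarith
    have := neg_abs_le (xc v - xc w)
    have := abs_lt.mp h
    linarith
  · have : (rk w : ℝ) + 1 ≤ rk v := by exact_mod_cast hlt
    have h5 : xc v - xc w ≥ 5 := by simp only [xc]; linarith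
    have := abs_lt.mp h
    linarith

lemma xc_gap (e : G.edgeSet) : xc (ea G e) + 5 ≤ xc (eb G e) := by
  have : (rk (ea G e) : ℝ) + 1 ≤ rk (eb G e) := by exact_mod_cast rk_lt G e
  simp only [xc]; linarith

def te (e : G.edgeSet) : ℝ := (xc (eb G e) - xc (ea G e) - 2 * dl G e) / 2

lemma two_te (e : G.edgeSet) : 2 * te G e = xc (eb G e) - xc (ea G e) - 2 * dl G e := by
  simp [te]; ring

lemma te_pos (e : G.edgeSet) : 0 < te G e := by
  have := xc_gap G e
  have := dl_lt G e
  simp only [te]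
  linarith

def posn (v : W) : Pt := !₂[xc v, 0]

lemma posn_inj : Function.Injective (posn (W := W)) := by
  intro v w h
  have h0 : xc v = xc w := congrArg (fun p : Pt => p 0) h
  exact xc_eq_of_close (by rw [h0]; simp)


def P0 (e : G.edgeSet) : Pt := posn (ea G e)
def P1 (e : G.edgeSet) : Pt := !₂[xc (ea G e) + dl G e, 1]
def P2 (e : G.edgeSet) : Pt := !₂[xc (ea G e) + dl G e + te G e, 1 + te G e]
def P3 (e : G.edgeSet) : Pt := !₂[xc (eb G e) - dl G e, 1]
def P4 (e : G.edgeSet) : Pt := posn (eb G e)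

def epts (e : G.edgeSet) : List Pt := [P0 G e, P1 G e, P2 G e, P3 G e, P4 G e]

lemma mem_epts {x : Pt} {e : G.edgeSet} :
    x ∈ polyImage (epts G e) ↔
      x ∈ segment ℝ (P0 G e) (P1 G e) ∨ x ∈ segment ℝ (P1 G e) (P2 G e) ∨
      x ∈ segment ℝ (P2 G e) (P3 G e) ∨ x ∈ segment ℝ (P3 G e) (P4 G e) := by
  simp [polyImage, polySegs, epts, or_assoc]

lemma seg_coord {p q x : Pt} (h : x ∈ segment ℝ p q) :
    ∃ θ : ℝ, 0 ≤ θ ∧ θ ≤ 1 ∧ x 0 = p 0 + θ * (q 0 - p 0) ∧ x 1 = p 1 + θ * (q 1 - p 1) := by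
  rw [segment_eq_image'] at h
  obtain ⟨θ, ⟨h0, h1⟩, rfl⟩ := h
  exact ⟨θ, h0, h1, by simp [PiLp.add_apply, PiLp.smul_apply, PiLp.sub_apply],
    by simp [PiLp.add_apply, PiLp.smul_apply, PiLp.sub_apply]⟩

def okk (e : G.edgeSet) (w : W) (σ : ℝ) : Prop :=
  (w = ea G e ∧ σ = 1) ∨ (w = eb G e ∧ σ = -1)

lemma cases_of_mem {e : G.edgeSet} {x : Pt} (hx : x ∈ polyImage (epts G e)) :
    (∃ w σ, okk G e w σ ∧ 0 ≤ x 1 ∧ x 1 ≤ 1 ∧ x 0 = xc w + σ * (x 1) * dl G e)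
    ∨ (x ∈ segment ℝ (P1 G e) (P2 G e) ∧ 1 ≤ x 1 ∧
        x 0 - x 1 = xc (ea G e) + dl G e - 1)
    ∨ (x ∈ segment ℝ (P2 G e) (P3 G e) ∧ 1 ≤ x 1 ∧
        x 0 + x 1 = xc (eb G e) - dl G e + 1) := by
  have ht := te_pos G e
  have htt := two_te G e
  rcases (mem_epts G).mp hx with h | h | h | h
  · left
    obtain ⟨θ, h0, h1, hx0, hx1⟩ := seg_coord h
    simp only [P0, P1, posn, Matrix.cons_val_zero, Matrix.cons_val_one, Matrix.head_cons, PiLp.toLp_apply] at hx0 hx1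
    refine ⟨ea G e, 1, Or.inl ⟨rfl, rfl⟩, by linarith, by linarith, ?_⟩
    rw [hx0, hx1]; ring
  · right; left
    obtain ⟨θ, h0, h1, hx0, hx1⟩ := seg_coord h
    simp only [P1, P2, Matrix.cons_val_zero, Matrix.cons_val_one, Matrix.head_cons, PiLp.toLp_apply] at hx0 hx1
    refine ⟨h, by nlinarith, by rw [hx0, hx1]; ring⟩
  · right; right
    obtain ⟨θ, h0, h1, hx0, hx1⟩ := seg_coord h
    simp only [P2, P3, Matrix.cons_val_zero, Matrix.cons_val_one, Matrix.head_cons, PiLp.toLp_apply] at hx0 hx1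
    have hb : xc (eb G e) - dl G e - (xc (ea G e) + dl G e + te G e) = te G e := by linarith
    rw [hb] at hx0
    refine ⟨h, by nlinarith, by rw [hx0, hx1]; linarith⟩
  · left
    obtain ⟨θ, h0, h1, hx0, hx1⟩ := seg_coord h
    simp only [P3, P4, posn, Matrix.cons_val_zero, Matrix.cons_val_one, Matrix.head_cons, PiLp.toLp_apply] at hx0 hx1
    refine ⟨eb G e, -1, Or.inr ⟨rfl, rfl⟩, by linarith, by linarith, ?_⟩
    rw [hx0, hx1]; ring

lemma keyX {e e' : G.edgeSet} {w w' : W} {σ σ' : ℝ}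
    (h : okk G e w σ) (h' : okk G e' w' σ')
    (heq : xc w + σ * dl G e = xc w' + σ' * dl G e') : e = e' := by
  have hd := dl_nonneg G e
  have hd' := dl_nonneg G e'
  have hl := dl_lt G e
  have hl' := dl_lt G e'
  have hσ : σ = 1 ∨ σ = -1 := h.imp And.right And.right
  have hσ' : σ' = 1 ∨ σ' = -1 := h'.imp And.right And.right
  have hww : w = w' := by
    apply xc_eq_of_close
    rw [abs_lt]
    rcases hσ with rfl | rfl <;> rcases hσ' with rfl | rfl <;> constructor <;> linarith
  subst hww
  have heq2 : σ * dl G e = σ' * dl G e' := by linarith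
  apply dl_inj G
  rcases hσ with rfl | rfl <;> rcases hσ' with rfl | rfl <;> linarith

lemma dir12 (e : G.edgeSet) :
    (P2 G e - P1 G e) 0 = te G e ∧ (P2 G e - P1 G e) 1 = te G e := by
  constructor <;>
    simp [P1, P2, PiLp.sub_apply] <;> ring

lemma dir23 (e : G.edgeSet) :
    (P3 G e - P2 G e) 0 = te G e ∧ (P3 G e - P2 G e) 1 = -te G e := by
  have := two_te G e
  constructor <;>
    simp [P2, P3, PiLp.sub_apply] <;> linarith

lemma inner_good (e e' : G.edgeSet) :
    @inner ℝ Pt _ (P2 G e - P1 G e) (P3 G e' - P2 G e') = 0 := by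
  rw [PiLp.inner_apply, Fin.sum_univ_two, (dir12 G e).1, (dir12 G e).2,
    (dir23 G e').1, (dir23 G e').2]
  simp [RCLike.inner_apply]


lemma sym2_cases {e : G.edgeSet} {u v : W} (h : (e : Sym2 W) = s(u, v)) :
    (ea G e = u ∧ eb G e = v) ∨ (ea G e = v ∧ eb G e = u) := by
  have h2 : s(ea G e, eb G e) = s(u, v) := (ends_eq G e).symm.trans h
  rw [Sym2.eq_iff] at h2
  exact h2

lemma through_key (e : G.edgeSet) :
    polyImage (epts G e) ∩ Set.range (posn (W := W)) =
      {posn (ea G e), posn (eb G e)} := by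
  ext x
  constructor
  · rintro ⟨hx, w, rfl⟩
    rcases cases_of_mem G hx with ⟨w', σ, hok, h0, h1, hX⟩ | ⟨-, hy, -⟩ | ⟨-, hy, -⟩
    · have hz : posn w 1 = 0 := by simp [posn]
      have hx0 : posn w 0 = xc w' := by rw [hX, hz]; ring
      have hpw : posn w = posn w' := by
        ext i; fin_cases i
        · simpa [posn] using hx0
        · simp [posn]
      rw [Set.mem_insert_iff, Set.mem_singleton_iff]
      rcases hok with ⟨rfl, -⟩ | ⟨rfl, -⟩
      · exact Or.inl hpw
      · exact Or.inr hpw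
    · norm_num [posn] at hy
    · norm_num [posn] at hy
  · intro hx
    rw [Set.mem_insert_iff, Set.mem_singleton_iff] at hx
    rcases hx with rfl | rfl
    · exact ⟨(mem_epts G).mpr (Or.inl (left_mem_segment ℝ _ _)), ⟨ea G e, rfl⟩⟩
    · exact ⟨(mem_epts G).mpr (Or.inr (Or.inr (Or.inr (right_mem_segment ℝ _ _)))),
        ⟨eb G e, rfl⟩⟩

def Draw : GDrawing G where
  pos := posn
  inj := posn_inj
  pts := epts G
  ends_ok := by
    intro e u v h
    rcases sym2_cases G h with ⟨h1, h2⟩ | ⟨h1, h2⟩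
    · exact Or.inl ⟨by simp [epts, P0, h1], by simp [epts, P4, h2]⟩
    · exact Or.inr ⟨by simp [epts, P0, h1], by simp [epts, P4, h2]⟩
  through := by
    intro e u v h
    rcases sym2_cases G h with ⟨h1, h2⟩ | ⟨h1, h2⟩
    · rw [← h1, ← h2]; exact through_key G e
    · rw [← h1, ← h2, Set.pair_comm]; exact through_key G e

lemma rac : RACDrawing (Draw G) := by
  intro e₁ e₂ hne x h1 h2 hv
  have hv' : x ∉ Set.range (posn (W := W)) := hv
  have hd := dl_nonneg G e₁
  have hd' := dl_nonneg G e₂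
  have hl := dl_lt G e₁
  have hl' := dl_lt G e₂
  have hm1 : x ∈ polyImage (epts G e₁) := h1
  have hm2 : x ∈ polyImage (epts G e₂) := h2
  rcases cases_of_mem G hm1 with ⟨w, σ, hok, hy0, hy1, hX⟩ | ⟨hs1, hy1, hX⟩ | ⟨hs1, hy1, hX⟩ <;>
    rcases cases_of_mem G hm2 with ⟨w', σ', hok', hy0', hy1', hX'⟩ | ⟨hs2, hy2, hX'⟩ | ⟨hs2, hy2, hX'⟩
  -- slant / slant
  · exfalso
    have hσ : σ = 1 ∨ σ = -1 := hok.imp And.right And.right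
    have hσ' : σ' = 1 ∨ σ' = -1 := hok'.imp And.right And.right
    have b1 : x 1 * dl G e₁ ≤ dl G e₁ := by nlinarith
    have b2 : 0 ≤ x 1 * dl G e₁ := mul_nonneg hy0 hd
    have b3 : x 1 * dl G e₂ ≤ dl G e₂ := by nlinarith
    have b4 : 0 ≤ x 1 * dl G e₂ := mul_nonneg hy0 hd'
    have hww : w = w' := by
      apply xc_eq_of_close
      rw [abs_lt]
      rcases hσ with rfl | rfl <;> rcases hσ' with rfl | rfl <;>
        constructor <;> nlinarith
    subst hww
    by_cases hz : x 1 = 0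
    · refine hv' ⟨w, ?_⟩
      rw [hz] at hX
      have e0 : x 0 = xc w := by rw [hX]; ring
      ext i; fin_cases i
      · simpa [posn] using e0.symm
      · simpa [posn] using hz.symm
    · have hc := mul_left_cancel₀ hz
        (show x 1 * (σ * dl G e₁) = x 1 * (σ' * dl G e₂) by linear_combination hX' - hX)
      exact hne (keyX G hok hok' (by linarith))
  -- slant / up
  · have h11 : x 1 = 1 := le_antisymm hy1 hy2
    rw [h11] at hX
    exact absurd (keyX G hok (Or.inl ⟨rfl, rfl⟩) (by linear_combination hX' - hX + h11)) hne
  -- slant / down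
  · have h11 : x 1 = 1 := le_antisymm hy1 hy2
    rw [h11] at hX
    exact absurd (keyX G hok (Or.inr ⟨rfl, rfl⟩) (by linear_combination hX' - hX - h11)) hne
  -- up / slant
  · have h11 : x 1 = 1 := le_antisymm hy1' hy1
    rw [h11] at hX'
    exact absurd (keyX G (Or.inl ⟨rfl, rfl⟩) hok' (by linear_combination hX' - hX - h11)) hne
  -- up / up
  · exact absurd (keyX G (Or.inl ⟨rfl, rfl⟩) (Or.inl ⟨rfl, rfl⟩)
      (by linear_combination hX' - hX)) hne
  -- up / down : perpendicular
  · refine ⟨(P1 G e₁, P2 G e₁), by simp [Draw, polySegs, epts], (P2 G e₂, P3 G e₂),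
      by simp [Draw, polySegs, epts], hs1, hs2, inner_good G e₁ e₂⟩
  -- down / slant
  · have h11 : x 1 = 1 := le_antisymm hy1' hy1
    rw [h11] at hX'
    exact absurd (keyX G (Or.inr ⟨rfl, rfl⟩) hok' (by linear_combination hX' - hX + h11)) hne
  -- down / up : perpendicular
  · refine ⟨(P2 G e₁, P3 G e₁), by simp [Draw, polySegs, epts], (P1 G e₂, P2 G e₂),
      by simp [Draw, polySegs, epts], hs1, hs2, ?_⟩
    rw [real_inner_comm]
    exact inner_good G e₂ e₁
  -- down / down
  · exact absurd (keyX G (Or.inr ⟨rfl, rfl⟩) (Or.inr ⟨rfl, rfl⟩)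
      (by linear_combination hX' - hX)) hne

end TBR

/-- Every graph admits a polyline RAC drawing with at most three bends per edge. -/
theorem three_bend_rac {V : Type*} [Fintype V] (G : SimpleGraph V) :
    ∃ D : GDrawing G, AtMostBends D 3 ∧ RACDrawing D :=
  ⟨TBR.Draw G, fun e => by simp [TBR.Draw, TBR.epts], TBR.rac G⟩
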